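/- Let H be a complex Hilbert space and T : H →L[ℂ] H a bounded self-adjoint operator with 0 ≤ T, and for λ > 0 let R_λ = (λ•1 + T)⁻¹. Then for f ∈ H, λ • R_λ f → 0 as λ → 0⁺ if and only if f lies in the closure of the range of T. -/

import Mathlib

open scoped InnerProductSpace

variable {H : Type*} [NormedAddCommGroup H] [InnerProductSpace ℂ H] [CompleteSpace H]

/-- The resolventOp `R_λ = (λ • 1 + T)⁻¹` of `-T`, as `Ring.inverse`. -/
noncomputable def resolventOp (T : H →L[ℂ] H) (l : ℝ) : H →L[ℂ] H :=
  Ring.inverse (l • (1 : H →L[ℂ] H) + T)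

section aux

variable (T : H →L[ℂ] H)

/-- Coercivity: `l * ‖x‖^2 ≤ re ⟪(l•1+T) x, x⟫`. -/
lemma aux_coercive (hpos : 0 ≤ T) {l : ℝ} (hl : 0 < l) (x : H) :
    l * ‖x‖ ^ 2 ≤ Complex.re ⟪(l • (1 : H →L[ℂ] H) + T) x, x⟫_ℂ := by
  have hp := ((ContinuousLinearMap.nonneg_iff_isPositive T).mp hpos).inner_nonneg_left x
  have : (l • (1 : H →L[ℂ] H) + T) x = (l : ℂ) • x + T x := by
    simp [ContinuousLinearMap.add_apply, ContinuousLinearMap.smul_apply,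
      Complex.coe_smul]
  rw [this, inner_add_left, inner_smul_left, Complex.add_re]
  have h1 : ((starRingEnd ℂ) ↑l * ⟪x, x⟫_ℂ).re = l * ‖x‖ ^ 2 := by
    rw [Complex.conj_ofReal, Complex.re_ofReal_mul]
    congr 1
    exact inner_self_eq_norm_sq (𝕜 := ℂ) x
  rw [h1]
  have hp' : 0 ≤ (⟪T x, x⟫_ℂ).re := (Complex.nonneg_iff (z := ⟪T x, x⟫_ℂ)).mp (by simpa using hp) |>.1
  linarith

lemma aux_norm_le (hpos : 0 ≤ T) {l : ℝ} (hl : 0 < l) (x : H) :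
    l * ‖x‖ ≤ ‖(l • (1 : H →L[ℂ] H) + T) x‖ := by
  rcases eq_or_ne x 0 with rfl | hx
  · simp
  have h := aux_coercive T hpos hl x
  have h2 : Complex.re ⟪(l • (1 : H →L[ℂ] H) + T) x, x⟫_ℂ ≤
      ‖(l • (1 : H →L[ℂ] H) + T) x‖ * ‖x‖ :=
    (Complex.re_le_norm _).trans (by exact norm_inner_le_norm _ _)
  have hxn : (0 : ℝ) < ‖x‖ := norm_pos_iff.mpr hx
  nlinarith

lemma aux_isUnit (hpos : 0 ≤ T) {l : ℝ} (hl : 0 < l) :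
    IsUnit (l • (1 : H →L[ℂ] H) + T) := by
  set A := l • (1 : H →L[ℂ] H) + T with hA
  have hanti : AntilipschitzWith (Real.toNNReal l)⁻¹ A := by
    refine ContinuousLinearMap.antilipschitz_of_bound A fun x => ?_
    rw [NNReal.coe_inv, Real.coe_toNNReal _ hl.le, ← div_eq_inv_mul, le_div_iff₀ (by exact_mod_cast hl)]
    calc ‖x‖ * l = l * ‖x‖ := mul_comm _ _
    _ ≤ ‖A x‖ := aux_norm_le T hpos hl x
  have hinj : A.ker = ⊥ := by
    rw [LinearMap.ker_eq_bot']
    intro x hx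
    have := aux_norm_le T hpos hl x
    rw [show (l • (1 : H →L[ℂ] H) + T) x = 0 from hx, norm_zero] at this
    have : ‖x‖ ≤ 0 := by nlinarith
    simpa [norm_le_zero_iff] using this
  have hclosed : IsClosed (Set.range A) :=
    hanti.isClosed_range A.uniformContinuous
  have hdense : A.range.topologicalClosure = ⊤ := by
    rw [Submodule.topologicalClosure_eq_top_iff]
    rw [Submodule.eq_bot_iff]
    intro v hv
    have h0 : ⟪A v, v⟫_ℂ = 0 := by
      have := hv (A v) (LinearMap.mem_range_self _ v)
      simpa [inner_eq_zero_symm] using this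
    have := aux_coercive T hpos hl v
    rw [h0] at this
    simp only [Complex.zero_re] at this
    have : ‖v‖ ^ 2 ≤ 0 := by nlinarith
    have : ‖v‖ = 0 := by nlinarith [sq_nonneg ‖v‖, norm_nonneg v]
    simpa using this
  have hsurj : A.range = ⊤ := by
    have : A.range.topologicalClosure = A.range := by
      apply le_antisymm
      · intro x hx
        have : x ∈ closure (Set.range A) := by
          have h' : x ∈ ((A : H →ₗ[ℂ] H).range.topologicalClosure : Set H) := hx
          rw [Submodule.topologicalClosure_coe, LinearMap.coe_range] at h'
          simpa using h'
        rwa [hclosed.closure_eq] at this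
      · exact Submodule.le_topologicalClosure _
    rw [← this, hdense]
  let e := ContinuousLinearEquiv.ofBijective A hinj hsurj
  have he : ⇑e = ⇑A := ContinuousLinearEquiv.coeFn_ofBijective A hinj hsurj
  refine ⟨⟨A, (e.symm : H →L[ℂ] H), ?_, ?_⟩, rfl⟩
  · ext x
    simp only [ContinuousLinearMap.mul_apply, ContinuousLinearMap.one_apply,
      ContinuousLinearEquiv.coe_coe]
    rw [← he]
    exact e.apply_symm_apply x
  · ext x
    simp only [ContinuousLinearMap.mul_apply, ContinuousLinearMap.one_apply,
      ContinuousLinearEquiv.coe_coe]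
    rw [← he]
    exact e.symm_apply_apply x


lemma aux_applyAR (hpos : 0 ≤ T) {l : ℝ} (hl : 0 < l) (y : H) :
    (l • (1 : H →L[ℂ] H) + T) (resolventOp T l y) = y := by
  have h := Ring.mul_inverse_cancel _ (aux_isUnit T hpos hl)
  have := congrFun (congrArg (fun S : H →L[ℂ] H => (S : H → H)) h) y
  simpa [ContinuousLinearMap.mul_apply, resolventOp] using this

lemma aux_applyRA (hpos : 0 ≤ T) {l : ℝ} (hl : 0 < l) (x : H) :
    resolventOp T l ((l • (1 : H →L[ℂ] H) + T) x) = x := by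
  have h := Ring.inverse_mul_cancel _ (aux_isUnit T hpos hl)
  have := congrFun (congrArg (fun S : H →L[ℂ] H => (S : H → H)) h) x
  simpa [ContinuousLinearMap.mul_apply, resolventOp] using this

lemma aux_contraction (hpos : 0 ≤ T) {l : ℝ} (hl : 0 < l) (y : H) :
    ‖l • resolventOp T l y‖ ≤ ‖y‖ := by
  have h1 : ‖l • resolventOp T l y‖ = l * ‖resolventOp T l y‖ := by
    rw [norm_smul, Real.norm_of_nonneg hl.le]
  rw [h1]
  calc l * ‖resolventOp T l y‖ ≤ ‖(l • (1 : H →L[ℂ] H) + T) (resolventOp T l y)‖ :=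
        aux_norm_le T hpos hl _
  _ = ‖y‖ := by rw [aux_applyAR T hpos hl y]

lemma aux_decomp (hpos : 0 ≤ T) {l : ℝ} (hl : 0 < l) (y : H) :
    y - T (resolventOp T l y) = l • resolventOp T l y := by
  set r := resolventOp T l y with hr
  have h := aux_applyAR T hpos hl y
  have h2 : (l • (1 : H →L[ℂ] H) + T) r = l • r + T r := by
    simp [ContinuousLinearMap.add_apply]
  rw [h2] at h
  rw [← h]
  abel

end aux

/-- Komatsu's equivalence: `λ • R_λ f → 0` as `λ → 0⁺` iff `f` lies in the closure of
the range of `T`. -/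
theorem tendsto_smul_resolvent_iff_mem_closure_range (T : H →L[ℂ] H)
    (hT : IsSelfAdjoint T) (hpos : 0 ≤ T) (f : H) :
    Filter.Tendsto (fun l : ℝ => l • resolventOp T l f)
        (nhdsWithin 0 (Set.Ioi 0)) (nhds 0) ↔
      f ∈ closure (Set.range T) := by
  constructor
  · intro h
    rw [Metric.mem_closure_iff]
    intro ε hε
    have hev : ∀ᶠ l in nhdsWithin (0 : ℝ) (Set.Ioi 0),
        ‖l • resolventOp T l f‖ < ε ∧ l ∈ Set.Ioi (0 : ℝ) := by
      refine Filter.Eventually.and ?_ (self_mem_nhdsWithin)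
      have := h.eventually (Metric.ball_mem_nhds (0 : H) hε)
      filter_upwards [this] with l hl
      simpa [dist_eq_norm] using hl
    obtain ⟨l, hl1, hl2⟩ := hev.exists
    refine ⟨T (resolventOp T l f), Set.mem_range_self _, ?_⟩
    rw [dist_eq_norm, aux_decomp T hpos hl2 f]
    exact hl1
  · intro hf
    rw [Metric.tendsto_nhdsWithin_nhds]
    intro ε hε
    obtain ⟨b, ⟨x, rfl⟩, hb⟩ := Metric.mem_closure_iff.mp hf (ε / 2) (by linarith)
    rw [dist_eq_norm] at hb
    refine ⟨ε / (4 * (‖x‖ + 1)), by positivity, fun l hl hld => ?_⟩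
    have hl0 : 0 < l := hl
    rw [Real.dist_eq, sub_zero, abs_of_pos hl0] at hld
    rw [dist_eq_norm, sub_zero]
    have key : l • resolventOp T l f
        = l • resolventOp T l (f - T x) + l • resolventOp T l (T x) := by
      rw [← smul_add, ← map_add, sub_add_cancel]
    have h1 : ‖l • resolventOp T l (f - T x)‖ ≤ ‖f - T x‖ := aux_contraction T hpos hl0 _
    have hTx : resolventOp T l (T x) = x - l • resolventOp T l x := by
      have : T x = (l • (1 : H →L[ℂ] H) + T) x - l • x := by
        simp [ContinuousLinearMap.add_apply]
      rw [this, map_sub, aux_applyRA T hpos hl0 x]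
      congr 1
      exact (resolventOp T l).map_smul_of_tower l x
    have h2 : ‖l • resolventOp T l (T x)‖ ≤ 2 * l * ‖x‖ := by
      rw [hTx, smul_sub]
      calc ‖l • x - l • (l • resolventOp T l x)‖
          ≤ ‖l • x‖ + ‖l • (l • resolventOp T l x)‖ := norm_sub_le _ _
      _ ≤ l * ‖x‖ + l * ‖l • resolventOp T l x‖ := by
          rw [norm_smul, norm_smul, Real.norm_of_nonneg hl0.le]
      _ ≤ l * ‖x‖ + l * ‖x‖ := by
          have := aux_contraction T hpos hl0 x
          nlinarith
      _ = 2 * l * ‖x‖ := by ring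
    have hb2 : 2 * l * ‖x‖ < ε / 2 := by
      have hx1 : (0:ℝ) < ‖x‖ + 1 := by positivity
      have : l * (‖x‖ + 1) < ε / 4 := by
        have := (mul_lt_mul_of_pos_right hld hx1)
        calc l * (‖x‖ + 1) < ε / (4 * (‖x‖ + 1)) * (‖x‖ + 1) := this
        _ = ε / 4 := by field_simp
      nlinarith [norm_nonneg x, hl0]
    calc ‖l • resolventOp T l f‖
        ≤ ‖l • resolventOp T l (f - T x)‖ + ‖l • resolventOp T l (T x)‖ := by
          rw [key]; exact norm_add_le _ _
    _ < ε / 2 + ε / 2 := by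
        have := h1.trans_lt hb
        linarith
    _ = ε := by ring
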